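/- Let (W,S) be a right-angled Coxeter system, w ∈ W and s ∈ S with |ws| > |w|. Then D_R(ws) = (D_R(w) ∩ C(s)) ∪ {s}, where C(s) is the set of generators commuting with s. -/

import Mathlib

open List

namespace RightAngledAux

open scoped Classical

variable {B W : Type*} [Group W] {M : CoxeterMatrix B} (cs : CoxeterSystem M W)

local prefix:100 "σ" => cs.simple
local prefix:100 "π" => cs.wordProd
local prefix:100 "ℓ" => cs.length

/-! ### Generic helpers -/

lemma conj_eq_iff {a t u : W} (ha : a * a = 1) : a * t * a = u ↔ t = a * u * a := by
  constructor
  · rintro rfl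
    have h : a * (a * t * a) * a = (a * a) * t * (a * a) := by group
    rw [h, ha, one_mul, mul_one]
  · rintro rfl
    have h : a * (a * u * a) * a = (a * a) * u * (a * a) := by group
    rw [h, ha, one_mul, mul_one]

lemma rightInvSeq_append (ω ψ : List B) :
    cs.rightInvSeq (ω ++ ψ) =
      (cs.rightInvSeq ω).map (fun t => (π ψ)⁻¹ * t * π ψ) ++ cs.rightInvSeq ψ := by
  induction ω with
  | nil => rfl
  | cons i ω ih =>
      rw [List.cons_append]
      rw [show cs.rightInvSeq (i :: (ω ++ ψ))
            = ((π (ω ++ ψ))⁻¹ * σ i * π (ω ++ ψ)) :: cs.rightInvSeq (ω ++ ψ) from rfl,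
          show cs.rightInvSeq (i :: ω) = ((π ω)⁻¹ * σ i * π ω) :: cs.rightInvSeq ω from rfl, ih]
      simp only [List.map_cons, List.cons_append, List.cons.injEq, and_true]
      rw [cs.wordProd_append]
      group

/-! ### The sign representation (needs the right-angled hypothesis) -/

/-- The underlying function of the sign permutation attached to a generator. -/
noncomputable def sgn (i : B) : W × ℤˣ → W × ℤˣ := fun p =>
  (σ i * p.1 * σ i, (if p.1 = σ i then -1 else 1) * p.2)

lemma sgn_involutive (i : B) : Function.Involutive (sgn cs i) := by
  rintro ⟨t, ε⟩
  show (σ i * (σ i * t * σ i) * σ i,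
      (if σ i * t * σ i = σ i then (-1:ℤˣ) else 1) * ((if t = σ i then (-1:ℤˣ) else 1) * ε))
      = (t, ε)
  have h1 : σ i * (σ i * t * σ i) * σ i = t := by
    have h : σ i * (σ i * t * σ i) * σ i = (σ i * σ i) * t * (σ i * σ i) := by group
    rw [h, cs.simple_mul_simple_self, one_mul, mul_one]
  have h2 : (σ i * t * σ i = σ i) ↔ (t = σ i) := by
    rw [conj_eq_iff (cs.simple_mul_simple_self i), cs.simple_mul_simple_self, one_mul]
  rw [h1]
  by_cases ht : t = σ i
  · simp [ht, h2]
  · simp [ht, h2]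

/-- The sign permutation attached to a generator. -/
noncomputable def sgnPerm (i : B) : Equiv.Perm (W × ℤˣ) := (sgn_involutive cs i).toPerm

lemma sgnPerm_apply (i : B) (t : W) (ε : ℤˣ) :
    sgnPerm cs i (t, ε) = (σ i * t * σ i, (if t = σ i then -1 else 1) * ε) := rfl

lemma sgnPerm_liftable (rightAngled : ∀ i j : B, i ≠ j → M i j = 2 ∨ M i j = 0) :
    M.IsLiftable (sgnPerm cs) := by
  intro i j
  rcases eq_or_ne i j with rfl | hij
  · rw [M.diagonal i, pow_one]
    refine Equiv.ext fun p => ?_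
    exact sgn_involutive cs i p
  rcases rightAngled i j hij with h2 | h0
  · -- M i j = 2 : the two sign permutations commute
    rw [h2]
    have hrel : σ i * σ j * (σ i * σ j) = 1 := by
      have h := cs.simple_mul_simple_pow i j
      rw [h2, pow_two] at h
      exact h
    have hcomm : σ i * σ j = σ j * σ i := by
      have h : (σ i * σ j)⁻¹ = σ j * σ i := by
        rw [mul_inv_rev, cs.inv_simple, cs.inv_simple]
      rw [← h]
      exact (inv_eq_of_mul_eq_one_right hrel).symm
    have hconj : σ j * σ i * σ j = σ i := by
      rw [← hcomm, cs.simple_mul_simple_cancel_right]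
    have hconj' : σ i * σ j * σ i = σ j := by
      rw [hcomm, cs.simple_mul_simple_cancel_right]
    ext ⟨t, ε⟩ : 1
    show ((sgnPerm cs i) * (sgnPerm cs j) * ((sgnPerm cs i) * (sgnPerm cs j))) (t, ε) = (t, ε)
    rw [Equiv.Perm.mul_apply, Equiv.Perm.mul_apply, Equiv.Perm.mul_apply,
      sgnPerm_apply, sgnPerm_apply, sgnPerm_apply, sgnPerm_apply]
    -- conditions
    have c2 : (σ j * t * σ j = σ i) ↔ (t = σ j * σ i * σ j) :=
      conj_eq_iff (cs.simple_mul_simple_self j)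
    have hjij : σ j * σ j * σ j = σ j := by
      rw [cs.simple_mul_simple_self, one_mul]
    have c3 : (σ i * (σ j * t * σ j) * σ i = σ j) ↔ (t = σ j) := by
      rw [conj_eq_iff (cs.simple_mul_simple_self i), conj_eq_iff (cs.simple_mul_simple_self j),
        hconj', hjij]
    have hiii : σ i * (σ j * σ i * σ j) * σ i = σ i := by
      rw [hconj, cs.simple_mul_simple_self, one_mul]
    have c4 : (σ j * (σ i * (σ j * t * σ j) * σ i) * σ j = σ i) ↔ (t = σ j * σ i * σ j) := by
      rw [conj_eq_iff (cs.simple_mul_simple_self j), conj_eq_iff (cs.simple_mul_simple_self i),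
        conj_eq_iff (cs.simple_mul_simple_self j), hiii]
    have hfirst : σ i * (σ j * (σ i * (σ j * t * σ j) * σ i) * σ j) * σ i = t := by
      have e1 : σ i * (σ j * (σ i * (σ j * t * σ j) * σ i) * σ j) * σ i
          = (σ i * σ j * (σ i * σ j)) * t * (σ j * σ i * (σ j * σ i)) := by group
      have e3 : σ j * σ i * (σ j * σ i) = 1 := by
        have h : σ j * σ i * (σ j * σ i) = (σ j * σ i * σ j) * σ i := by group
        rw [h, hconj, cs.simple_mul_simple_self]
      rw [e1, hrel, e3, one_mul, mul_one]
    rw [Prod.ext_iff]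
    refine ⟨hfirst, ?_⟩
    show (if σ j * (σ i * (σ j * t * σ j) * σ i) * σ j = σ i then (-1:ℤˣ) else 1) *
        ((if σ i * (σ j * t * σ j) * σ i = σ j then (-1:ℤˣ) else 1) *
        ((if σ j * t * σ j = σ i then (-1:ℤˣ) else 1) *
        ((if t = σ j then (-1:ℤˣ) else 1) * ε))) = ε
    rw [if_congr c2 rfl rfl, if_congr c3 rfl rfl, if_congr c4 rfl rfl]
    by_cases h1 : t = σ j * σ i * σ j <;> by_cases hh2 : t = σ j
    · rw [if_pos h1, if_pos hh2]
      simp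
    · rw [if_pos h1, if_neg hh2]
      simp
    · rw [if_neg h1, if_pos hh2]
      simp
    · rw [if_neg h1, if_neg hh2]
      simp
  · rw [h0, pow_zero]

/-- The sign representation of a right-angled Coxeter group. -/
noncomputable def Phi (rightAngled : ∀ i j : B, i ≠ j → M i j = 2 ∨ M i j = 0) :
    W →* Equiv.Perm (W × ℤˣ) := cs.lift ⟨sgnPerm cs, sgnPerm_liftable cs rightAngled⟩

variable {rightAngled : ∀ i j : B, i ≠ j → M i j = 2 ∨ M i j = 0}


lemma Phi_simple (i : B) : Phi cs rightAngled (σ i) = sgnPerm cs i :=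
  cs.lift_apply_simple (sgnPerm_liftable cs rightAngled) i

lemma Phi_wordProd (ω : List B) (t : W) (ε : ℤˣ) :
    Phi cs rightAngled (π ω) (t, ε) =
      (π ω * t * (π ω)⁻¹, (-1 : ℤˣ) ^ ((cs.rightInvSeq ω).count t) * ε) := by
  induction ω with
  | nil => simp
  | cons i ω ih =>
      rw [cs.wordProd_cons, map_mul, Equiv.Perm.mul_apply, ih, Phi_simple, sgnPerm_apply]
      rw [CoxeterSystem.rightInvSeq]
      have hcond : (π ω * t * (π ω)⁻¹ = σ i) ↔ (t = (π ω)⁻¹ * σ i * π ω) := by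
        constructor
        · intro h
          rw [← h]; group
        · intro h
          rw [h]; group
      have hmain : σ i * (π ω * t * (π ω)⁻¹) * σ i = (σ i * π ω) * t * (σ i * π ω)⁻¹ := by
        rw [mul_inv_rev, cs.inv_simple]; group
      by_cases hc : t = (π ω)⁻¹ * σ i * π ω
      · rw [if_pos (hcond.mpr hc)]
        rw [Prod.ext_iff]
        refine ⟨hmain, ?_⟩
        show (-1 : ℤˣ) * ((-1:ℤˣ) ^ ((cs.rightInvSeq ω).count t) * ε)
            = (-1:ℤˣ) ^ (((π ω)⁻¹ * σ i * π ω :: cs.rightInvSeq ω).count t) * ε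
        rw [hc, List.count_cons_self, pow_succ]
        have harith : ∀ (a b : ℤˣ), -1 * (a * b) = a * -1 * b := fun a b => by
          rw [← mul_assoc, mul_comm (-1 : ℤˣ) a]
        exact harith _ _
      · rw [if_neg (fun h => hc (hcond.mp h))]
        rw [Prod.ext_iff]
        refine ⟨hmain, ?_⟩
        show (1 : ℤˣ) * ((-1:ℤˣ) ^ ((cs.rightInvSeq ω).count t) * ε)
            = (-1:ℤˣ) ^ (((π ω)⁻¹ * σ i * π ω :: cs.rightInvSeq ω).count t) * ε
        rw [List.count_cons_of_ne (Ne.symm hc), one_mul]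

/-- Strong exchange, membership form: if `i` is a right descent of `w`, then `σ i` occurs in the
right inversion sequence of any reduced word for `w`. -/
lemma descent_mem_rightInvSeq
    (rightAngled : ∀ i j : B, i ≠ j → M i j = 2 ∨ M i j = 0)
    {w : W} {i : B} (hd : cs.IsRightDescent w i)
    {ω : List B} (hω : cs.IsReduced ω) (hw : π ω = w) :
    σ i ∈ cs.rightInvSeq ω := by
  by_contra hmem
  have hc : (cs.rightInvSeq ω).count (σ i) = 0 := List.count_eq_zero.mpr hmem
  obtain ⟨τ, hτlen, hτ⟩ := cs.exists_reduced_word (w * σ i)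
  have hτred : cs.IsReduced τ := by
    exact hτlen
  have hsisi : σ i * σ i * σ i = σ i := by
    rw [cs.simple_mul_simple_self, one_mul]
  have way2 : Phi cs rightAngled (w * σ i) (σ i, (1:ℤˣ)) = (w * σ i * σ i * (w * σ i)⁻¹, -1) := by
    rw [map_mul, Equiv.Perm.mul_apply, Phi_simple, sgnPerm_apply, if_pos rfl, hsisi, ← hw,
      Phi_wordProd, hw, hc]
    have h1 : w * σ i * (w)⁻¹ = w * σ i * σ i * (w * σ i)⁻¹ := by
      rw [cs.simple_mul_simple_cancel_right, mul_inv_rev, cs.inv_simple, ← mul_assoc]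
    rw [Prod.ext_iff]
    exact ⟨h1, by simp⟩
  have way1 : Phi cs rightAngled (w * σ i) (σ i, (1:ℤˣ))
      = (w * σ i * σ i * (w * σ i)⁻¹,
          (-1 : ℤˣ) ^ ((cs.rightInvSeq τ).count (σ i)) * 1) := by
    rw [hτ, Phi_wordProd]
  rw [way1] at way2
  have hsgn : (-1 : ℤˣ) ^ ((cs.rightInvSeq τ).count (σ i)) * 1 = -1 :=
    congrArg Prod.snd way2
  have hmemτ : σ i ∈ cs.rightInvSeq τ := by
    by_contra hh
    rw [List.count_eq_zero.mpr hh] at hsgn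
    simp at hsgn
  have hinv := cs.isRightInversion_of_mem_rightInvSeq hτred hmemτ
  rw [← hτ] at hinv
  have hlt : ℓ (w * σ i * σ i) < ℓ (w * σ i) := hinv.2
  rw [cs.simple_mul_simple_cancel_right] at hlt
  have hd' : ℓ (w * σ i) < ℓ w := hd
  omega

/-- Exchange step. -/
lemma descent_step {x : W} {ψ : List B} {i : B}
    (rightAngled : ∀ i j : B, i ≠ j → M i j = 2 ∨ M i j = 0)
    (hred : ℓ (x * π ψ) = ℓ x + ψ.length)
    (hd : cs.IsRightDescent (x * π ψ) i)
    (hni : σ i ∉ cs.rightInvSeq ψ) :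
    ℓ (x * π ψ * σ i * (π ψ)⁻¹) < ℓ x := by
  obtain ⟨ω, hωlen, hω⟩ := cs.exists_reduced_word x
  have hωred : cs.IsReduced ω := by
    exact hωlen
  have happ : π (ω ++ ψ) = x * π ψ := by rw [cs.wordProd_append, ← hω]
  have happred : cs.IsReduced (ω ++ ψ) := by
    unfold CoxeterSystem.IsReduced
    rw [happ, hred, List.length_append, hω, show ℓ (π ω) = ω.length from hωlen]
  have hmem : σ i ∈ cs.rightInvSeq (ω ++ ψ) :=
    descent_mem_rightInvSeq cs rightAngled hd happred happ
  rw [rightInvSeq_append, List.mem_append] at hmem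
  rcases hmem with hmem | hmem
  · rw [List.mem_map] at hmem
    obtain ⟨t, htmem, ht⟩ := hmem
    have htval : t = π ψ * σ i * (π ψ)⁻¹ := by
      rw [← ht]; group
    have hinv := cs.isRightInversion_of_mem_rightInvSeq hωred htmem
    rw [← hω] at hinv
    have hlt := hinv.2
    rw [htval] at hlt
    have heq : x * π ψ * σ i * (π ψ)⁻¹ = x * (π ψ * σ i * (π ψ)⁻¹) := by group
    rw [heq]
    exact hlt
  · exact absurd hmem hni

/-! ### A model of the infinite dihedral group inside `Equiv.Perm ℤ` -/

def zrefl (c : ℤ) : Equiv.Perm ℤ :=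
  Function.Involutive.toPerm (fun z => c - z) (fun z => by show c - (c - z) = z; omega)

lemma zrefl_apply (c z : ℤ) : zrefl c z = c - z := rfl

lemma zrefl_mul_self (c : ℤ) : zrefl c * zrefl c = 1 := by
  ext z
  show zrefl c (zrefl c z) = z
  rw [zrefl_apply, zrefl_apply]; omega

lemma zrefl_conj (b c : ℤ) : zrefl b * zrefl c * zrefl b = zrefl (2*b - c) := by
  ext z
  show zrefl b (zrefl c (zrefl b z)) = zrefl (2*b - c) z
  rw [zrefl_apply, zrefl_apply, zrefl_apply, zrefl_apply]; omega

lemma zrefl_injective : Function.Injective zrefl := by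
  intro c c' h
  have h0 := congrArg (fun e : Equiv.Perm ℤ => e 0) h
  rw [show (zrefl c) 0 = c - 0 from rfl,
    show (zrefl c') 0 = c' - 0 from rfl] at h0
  omega

/-- The map sending `a` to `zrefl 0`, `b` to `zrefl 1` and everything else to `1`. -/
noncomputable def dihf (a b : B) : B → Equiv.Perm ℤ := fun k =>
  if k = a then zrefl 0 else if k = b then zrefl 1 else 1

lemma dihf_sq (a b k : B) : dihf a b k * dihf a b k = 1 := by
  unfold dihf
  split_ifs
  · exact zrefl_mul_self _
  · exact zrefl_mul_self _
  · exact one_mul 1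

lemma dihf_liftable (rightAngled : ∀ i j : B, i ≠ j → M i j = 2 ∨ M i j = 0)
    {a b : B} (hab : a ≠ b) (hM : M a b = 0) :
    M.IsLiftable (dihf a b : B → Equiv.Perm ℤ) := by
  intro i j
  rcases eq_or_ne i j with rfl | hij
  · rw [M.diagonal, pow_one]
    exact dihf_sq a b i
  have hone : dihf a b i = 1 ∨ dihf a b j = 1 ∨ M i j = 0 := by
    by_cases hia : i = a
    · subst hia
      by_cases hjb : j = b
      · subst hjb
        exact Or.inr (Or.inr hM)
      · refine Or.inr (Or.inl ?_)
        unfold dihf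
        rw [if_neg (fun h => hij h.symm), if_neg hjb]
    · by_cases hib : i = b
      · subst hib
        by_cases hja : j = a
        · subst hja
          refine Or.inr (Or.inr ?_)
          rw [M.symmetric]
          exact hM
        · refine Or.inr (Or.inl ?_)
          unfold dihf
          rw [if_neg hja, if_neg (fun h => hij h.symm)]
      · refine Or.inl ?_
        unfold dihf
        rw [if_neg hia, if_neg hib]
  rcases hone with h | h | h
  · rcases rightAngled i j hij with h2 | h0
    · rw [h2, h, one_mul, pow_two]
      exact dihf_sq a b j
    · rw [h0, pow_zero]
  · rcases rightAngled i j hij with h2 | h0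
    · rw [h2, h, mul_one, pow_two]
      exact dihf_sq a b i
    · rw [h0, pow_zero]
  · rw [h, pow_zero]

/-! ### Alternating words -/

def altw (a b : B) : ℕ → List B
  | 0 => []
  | (k+1) => a :: altw b a k

lemma altw_length (a b : B) : ∀ k, (altw a b k).length = k
  | 0 => rfl
  | (k+1) => by rw [altw, List.length_cons, altw_length b a k]

lemma tail_good {a b : B} (ρ : W →* Equiv.Perm ℤ)
    (hρa : ρ (σ a) = zrefl 0) (hρb : ρ (σ b) = zrefl 1) :
    ∀ k : ℕ,
      (∀ t ∈ cs.rightInvSeq ((altw b a k).reverse), ∃ z : ℤ, 1 ≤ z ∧ ρ t = zrefl z) ∧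
      (∀ t ∈ cs.rightInvSeq ((altw a b k).reverse), ∃ z : ℤ, z ≤ 0 ∧ ρ t = zrefl z) := by
  intro k
  induction k with
  | zero =>
      constructor <;> · intro t ht; simp [altw] at ht
  | succ k ih =>
      obtain ⟨ih1, ih2⟩ := ih
      constructor
      · intro t ht
        rw [show altw b a (k+1) = b :: altw a b k from rfl, List.reverse_cons,
          ← List.concat_eq_append, cs.rightInvSeq_concat, List.concat_eq_append,
          List.mem_append, List.mem_singleton] at ht
        rcases ht with ht | ht
        · rw [List.mem_map] at ht
          obtain ⟨t', ht', rfl⟩ := ht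
          obtain ⟨z', hz', hρ⟩ := ih2 t' ht'
          refine ⟨2 - z', by omega, ?_⟩
          rw [MulAut.conj_apply, cs.inv_simple, map_mul, map_mul, hρb, hρ, zrefl_conj]
          norm_num
        · subst ht
          exact ⟨1, le_refl 1, hρb⟩
      · intro t ht
        rw [show altw a b (k+1) = a :: altw b a k from rfl, List.reverse_cons,
          ← List.concat_eq_append, cs.rightInvSeq_concat, List.concat_eq_append,
          List.mem_append, List.mem_singleton] at ht
        rcases ht with ht | ht
        · rw [List.mem_map] at ht
          obtain ⟨t', ht', rfl⟩ := ht
          obtain ⟨z', hz', hρ⟩ := ih1 t' ht'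
          refine ⟨-z', by omega, ?_⟩
          rw [MulAut.conj_apply, cs.inv_simple, map_mul, map_mul, hρa, hρ, zrefl_conj]
          norm_num
        · subst ht
          exact ⟨0, le_refl 0, hρa⟩

/-! ### Descent lemmas -/

lemma step_aux (rightAngled : ∀ i j : B, i ≠ j → M i j = 2 ∨ M i j = 0)
    {v : W} {c : B} (u : List B)
    (hdc : cs.IsRightDescent v c)
    (hlen : ℓ (v * π u) + u.length = ℓ v)
    (hni : σ c ∉ cs.rightInvSeq u.reverse) :
    ℓ (v * (σ c * π u)) + (u.length + 1) ≤ ℓ v := by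
  have hx : (v * π u) * π u.reverse = v := by
    rw [cs.wordProd_reverse]; group
  have hred : ℓ ((v * π u) * π u.reverse) = ℓ (v * π u) + (u.reverse).length := by
    rw [hx, List.length_reverse]; omega
  have hd' : cs.IsRightDescent ((v * π u) * π u.reverse) c := by
    rw [hx]; exact hdc
  have hstep := descent_step cs rightAngled hred hd' hni
  have heq : (v * π u) * π u.reverse * σ c * (π u.reverse)⁻¹ = v * (σ c * π u) := by
    rw [cs.wordProd_reverse]; group
  rw [heq] at hstep
  omega

lemma no_double_descent (rightAngled : ∀ i j : B, i ≠ j → M i j = 2 ∨ M i j = 0)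
    {v : W} {a b : B} (hab : a ≠ b) (hM : M a b = 0)
    (hda : cs.IsRightDescent v a) (hdb : cs.IsRightDescent v b) : False := by
  set ρ : W →* Equiv.Perm ℤ := cs.lift ⟨dihf a b, dihf_liftable rightAngled hab hM⟩ with hρ
  have hρa : ρ (σ a) = zrefl 0 := by
    rw [hρ, cs.lift_apply_simple]
    unfold dihf
    rw [if_pos rfl]
  have hρb : ρ (σ b) = zrefl 1 := by
    rw [hρ, cs.lift_apply_simple]
    unfold dihf
    rw [if_neg (fun h => hab h.symm), if_pos rfl]
  have hlow : ∀ (w : List B), ℓ v ≤ ℓ (v * π w) + w.length := by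
    intro w
    have h1 : ℓ ((v * π w) * π w.reverse) ≤ ℓ (v * π w) + ℓ (π w.reverse) :=
      cs.length_mul_le _ _
    have h2 : ℓ (π w.reverse) ≤ w.length := by
      have := cs.length_wordProd_le w.reverse
      rwa [List.length_reverse] at this
    have h3 : (v * π w) * π w.reverse = v := by
      rw [cs.wordProd_reverse]; group
    rw [h3] at h1
    omega
  have key : ∀ k : ℕ, ℓ (v * π (altw b a k)) + k = ℓ v ∧ ℓ (v * π (altw a b k)) + k = ℓ v := by
    intro k
    induction k with
    | zero => constructor <;> simp [altw]
    | succ k ih =>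
        obtain ⟨ih1, ih2⟩ := ih
        constructor
        · -- altw b a (k+1) = b :: altw a b k
          have hni : σ b ∉ cs.rightInvSeq (altw a b k).reverse := by
            intro hmem
            obtain ⟨z, hz, hzz⟩ := (tail_good cs ρ hρa hρb k).2 _ hmem
            rw [hρb] at hzz
            have := zrefl_injective hzz
            omega
          have hlen : ℓ (v * π (altw a b k)) + (altw a b k).length = ℓ v := by
            rw [altw_length]; exact ih2
          have hup := step_aux cs rightAngled (altw a b k) hdb hlen hni
          rw [altw_length] at hup
          have hdown := hlow (altw b a (k+1))
          rw [altw_length] at hdown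
          have heq : v * π (altw b a (k+1)) = v * (σ b * π (altw a b k)) := by
            rw [show altw b a (k+1) = b :: altw a b k from rfl, cs.wordProd_cons]
          rw [heq] at hdown ⊢
          omega
        · have hni : σ a ∉ cs.rightInvSeq (altw b a k).reverse := by
            intro hmem
            obtain ⟨z, hz, hzz⟩ := (tail_good cs ρ hρa hρb k).1 _ hmem
            rw [hρa] at hzz
            have := zrefl_injective hzz
            omega
          have hlen : ℓ (v * π (altw b a k)) + (altw b a k).length = ℓ v := by
            rw [altw_length]; exact ih1
          have hup := step_aux cs rightAngled (altw b a k) hda hlen hni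
          rw [altw_length] at hup
          have hdown := hlow (altw a b (k+1))
          rw [altw_length] at hdown
          have heq : v * π (altw a b (k+1)) = v * (σ a * π (altw b a k)) := by
            rw [show altw a b (k+1) = a :: altw b a k from rfl, cs.wordProd_cons]
          rw [heq] at hdown ⊢
          omega
  have hbad := (key (ℓ v + 1)).1
  omega

lemma descent_two_step (rightAngled : ∀ i j : B, i ≠ j → M i j = 2 ∨ M i j = 0)
    {v : W} {a b : B} (hab : σ a ≠ σ b)
    (hda : cs.IsRightDescent v a) (hdb : cs.IsRightDescent v b) :
    ℓ (v * σ a * σ b) + 2 = ℓ v := by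
  have hlen : ℓ (v * π [b]) + ([b] : List B).length = ℓ v := by
    rw [cs.wordProd_singleton, List.length_singleton]
    have hdb' : ℓ (v * σ b) < ℓ v := hdb
    have := (cs.length_mul_simple v b).resolve_left (by omega)
    omega
  have hni : σ a ∉ cs.rightInvSeq ([b] : List B).reverse := by
    rw [show ([b] : List B).reverse = [b] from rfl, cs.rightInvSeq_singleton,
      List.mem_singleton]
    exact hab
  have hup := step_aux cs rightAngled [b] hda hlen hni
  rw [cs.wordProd_singleton, List.length_singleton, ← mul_assoc] at hup
  have hdown1 : ℓ v ≤ ℓ (v * σ a) + 1 := by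
    have := cs.length_mul_simple v a
    omega
  have hdown2 : ℓ (v * σ a) ≤ ℓ (v * σ a * σ b) + 1 := by
    have := cs.length_mul_simple (v * σ a) b
    omega
  omega

lemma simple_injective (rightAngled : ∀ i j : B, i ≠ j → M i j = 2 ∨ M i j = 0)
    {i j : B} (hij : i ≠ j) : σ i ≠ σ j := by
  intro h
  have hf : M.IsLiftable (fun k => if k = i then (-1 : ℤˣ) else 1) := by
    intro p q
    have hsq : ∀ k : B, (if k = i then (-1 : ℤˣ) else 1) ^ 2 = 1 := by
      intro k
      by_cases hk : k = i <;> simp [hk]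
    rcases eq_or_ne p q with rfl | hpq
    · rw [M.diagonal, pow_one]
      by_cases hp : p = i <;> simp [hp]
    · rcases rightAngled p q hpq with h2 | h0
      · rw [h2, mul_pow, hsq, hsq, one_mul]
      · rw [h0, pow_zero]
  have h1 : cs.lift ⟨fun k => if k = i then (-1 : ℤˣ) else 1, hf⟩ (σ i) = -1 := by
    rw [cs.lift_apply_simple]
    simp
  have h2 : cs.lift ⟨fun k => if k = i then (-1 : ℤˣ) else 1, hf⟩ (σ j) = 1 := by
    rw [cs.lift_apply_simple]
    show (if j = i then (-1 : ℤˣ) else 1) = 1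
    rw [if_neg (fun hh => hij hh.symm)]
  rw [h, h2] at h1
  exact absurd h1 (by decide)

end RightAngledAux

/-- Let `(W,S)` be a right-angled Coxeter system, `w ∈ W` and `s ∈ S` with `|ws| > |w|`.
Then `D_R(ws) = (D_R(w) ∩ C(s)) ∪ {s}`. -/
theorem right_angled_rightDescent_mul_simple
    {B W : Type*} [Group W] (M : CoxeterMatrix B) (cs : CoxeterSystem M W)
    (rightAngled : ∀ i j : B, i ≠ j → M i j = 2 ∨ M i j = 0)
    (w : W) (s : B) (h : cs.length w < cs.length (w * cs.simple s)) :
    {j : B | cs.IsRightDescent (w * cs.simple s) j} =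
      ({j : B | cs.IsRightDescent w j} ∩
        {j : B | cs.simple j * cs.simple s = cs.simple s * cs.simple j}) ∪ {s} := by
  have hlen : cs.length (w * cs.simple s) = cs.length w + 1 :=
    (cs.length_mul_simple w s).resolve_right (by omega)
  have hds : cs.IsRightDescent (w * cs.simple s) s := by
    show cs.length (w * cs.simple s * cs.simple s) < cs.length (w * cs.simple s)
    rw [cs.simple_mul_simple_cancel_right]
    omega
  ext j
  simp only [Set.mem_union, Set.mem_inter_iff, Set.mem_setOf_eq, Set.mem_singleton_iff]
  constructor
  · intro hdj
    by_cases hjs : j = s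
    · exact Or.inr hjs
    left
    have hM2 : M j s = 2 := by
      rcases rightAngled j s hjs with h2 | h0
      · exact h2
      · exact (RightAngledAux.no_double_descent cs rightAngled hjs h0 hdj hds).elim
    have hcomm : cs.simple j * cs.simple s = cs.simple s * cs.simple j := by
      have hrel := cs.simple_mul_simple_pow j s
      rw [hM2, pow_two] at hrel
      have hinv : (cs.simple j * cs.simple s)⁻¹ = cs.simple s * cs.simple j := by
        rw [mul_inv_rev, cs.inv_simple, cs.inv_simple]
      rw [← hinv]
      exact (inv_eq_of_mul_eq_one_right hrel).symm
    refine ⟨?_, hcomm⟩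
    have hts := RightAngledAux.descent_two_step cs rightAngled
      (RightAngledAux.simple_injective cs rightAngled (Ne.symm hjs)) hds hdj
    rw [cs.simple_mul_simple_cancel_right] at hts
    show cs.length (w * cs.simple j) < cs.length w
    omega
  · rintro (⟨hdj, hcomm⟩ | rfl)
    · show cs.length (w * cs.simple s * cs.simple j) < cs.length (w * cs.simple s)
      have h1 : w * cs.simple s * cs.simple j = w * cs.simple j * cs.simple s := by
        rw [mul_assoc, mul_assoc, ← hcomm]
      rw [h1]
      have h2 : cs.length (w * cs.simple j * cs.simple s) ≤ cs.length (w * cs.simple j) + 1 := by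
        have := cs.length_mul_le (w * cs.simple j) (cs.simple s)
        rwa [cs.length_simple] at this
      have hdj' : cs.length (w * cs.simple j) < cs.length w := hdj
      omega
    · exact hds
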